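/- arXiv:2406.08522 — 4 statements merged into one kernel-verified Lean document; each statement's English description precedes it below -/
import Mathlib

section
/- The function g(λ) = log(1/λ) - ((1-λ)/λ)·log(1/(1-λ)) is strictly monotonically decreasing on (0, 0.5) and tends to 0 as λ → 0.5. -/
open Real

lemma key_log (x : ℝ) (hx0 : 0 < x) (hx1 : x < 1/2) :
    -2 * x < Real.log (1 - x) := by
  have h1x : (0:ℝ) < 1 - x := by linarith
  rw [Real.lt_log_iff_exp_lt h1x]
  have h1 : 2 * x + 1 < Real.exp (2 * x) := Real.add_one_lt_exp (by positivity)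
  have h2 : Real.exp (-2 * x) = (Real.exp (2 * x))⁻¹ := by
    rw [← Real.exp_neg]; ring_nf
  rw [h2]
  rw [inv_lt_iff_one_lt_mul₀ (Real.exp_pos _)]
  nlinarith [Real.exp_pos (2 * x)]

lemma hasDeriv_g (x : ℝ) (hx0 : 0 < x) (hx1 : x < 1/2) :
    HasDerivAt (fun l : ℝ => Real.log (1 / l) - ((1 - l) / l) * Real.log (1 / (1 - l)))
      (-2 / x + Real.log (1 / (1 - x)) / x ^ 2) x := by
  have hx : x ≠ 0 := hx0.ne'
  have h1x : (0:ℝ) < 1 - x := by linarith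
  have h1xne : (1:ℝ) - x ≠ 0 := h1x.ne'
  -- derivative of l ↦ log (1/l)
  have hinv : HasDerivAt (fun l : ℝ => 1 / l) (-(x ^ 2)⁻¹) x := by
    simpa [one_div] using hasDerivAt_inv hx
  have hlog1 : HasDerivAt (fun l : ℝ => Real.log (1 / l)) (-(x ^ 2)⁻¹ / (1 / x)) x :=
    hinv.log (by positivity)
  -- derivative of l ↦ (1 - l) / l
  have hnum : HasDerivAt (fun l : ℝ => 1 - l) (-1) x := by
    simpa using (hasDerivAt_id x).const_sub 1
  have hden : HasDerivAt (fun l : ℝ => l) 1 x := hasDerivAt_id x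
  have hdiv : HasDerivAt (fun l : ℝ => (1 - l) / l)
      ((-1 * x - (1 - x) * 1) / x ^ 2) x := hnum.div hden hx
  -- derivative of l ↦ log (1/(1-l))
  have hinv2 : HasDerivAt (fun l : ℝ => 1 / (1 - l)) (-(-1) / (1 - x) ^ 2) x := by
    have h : HasDerivAt (fun l : ℝ => (1 - l)⁻¹) (-(-1) / (1 - x) ^ 2) x := hnum.inv h1xne
    simpa [one_div] using h
  have hlog2 : HasDerivAt (fun l : ℝ => Real.log (1 / (1 - l)))
      ((-(-1) / (1 - x) ^ 2) / (1 / (1 - x))) x := hinv2.log (by positivity)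
  have hmul := hdiv.mul hlog2
  have htot := hlog1.sub hmul
  refine htot.congr_deriv ?_
  have hlogeq : Real.log (1 / (1 - x)) = -Real.log (1 - x) := by
    rw [one_div, Real.log_inv]
  field_simp
  ring

theorem stmt_1 :
    StrictAntiOn
      (fun l : ℝ => Real.log (1 / l) - ((1 - l) / l) * Real.log (1 / (1 - l)))
      (Set.Ioo 0 (1 / 2)) ∧
    Filter.Tendsto
      (fun l : ℝ => Real.log (1 / l) - ((1 - l) / l) * Real.log (1 / (1 - l)))
      (nhdsWithin (1 / 2) (Set.Ioo 0 (1 / 2))) (nhds 0) := by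
  constructor
  · apply strictAntiOn_of_deriv_neg (convex_Ioo 0 (1/2))
    · intro x hx
      obtain ⟨hx0, hx1⟩ := hx
      have hx : x ≠ 0 := hx0.ne'
      have h1xne : (1:ℝ) - x ≠ 0 := by intro h; nlinarith
      have ha : 1 / x ≠ 0 := by positivity
      have hb : 1 / (1 - x) ≠ 0 := by
        have : (0:ℝ) < 1 - x := by nlinarith
        positivity
      apply ContinuousAt.continuousWithinAt
      fun_prop (disch := assumption)
    · rw [interior_Ioo]
      intro x hx
      obtain ⟨hx0, hx1⟩ := hx
      rw [(hasDeriv_g x hx0 hx1).deriv]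
      have hkey := key_log x hx0 hx1
      have hlogeq : Real.log (1 / (1 - x)) = -Real.log (1 - x) := by
        rw [one_div, Real.log_inv]
      rw [hlogeq]
      have hx2 : (0:ℝ) < x ^ 2 := by positivity
      rw [div_add_div _ _ (ne_of_gt hx0) (ne_of_gt hx2), div_neg_iff]
      right
      constructor
      · nlinarith
      · positivity
  · have hc : ContinuousAt
        (fun l : ℝ => Real.log (1 / l) - ((1 - l) / l) * Real.log (1 / (1 - l))) (1/2) := by
      have h1 : (1/2 : ℝ) ≠ 0 := by norm_num
      have h2 : (1:ℝ) - 1/2 ≠ 0 := by norm_num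
      fun_prop (disch := norm_num)
    have := hc.continuousWithinAt (s := Set.Ioo 0 (1/2))
    have heval : Real.log (1 / (1/2 : ℝ)) - ((1 - 1/2) / (1/2)) * Real.log (1 / (1 - 1/2)) = 0 := by
      norm_num
    rw [ContinuousWithinAt] at this
    convert this using 2
    rw [heval]
end

section
/- There exist a dimension d ≥ 1, finitely many feature vectors x_u ∈ ℝ^d for u in a set S with |S| ≥ 2, such that the positive-sample log-likelihood L(θ) = log(1 - ∏_{u∈S}(1 - σ(⟨θ, x_u⟩))) is not concave in θ. -/
open scoped RealInnerProductSpace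

noncomputable def sigmoid (t : ℝ) : ℝ := 1 / (1 + Real.exp (-t))

theorem stmt_14 :
    ∃ (d n : ℕ) (x : Fin n → EuclideanSpace ℝ (Fin d)), 1 ≤ d ∧ 2 ≤ n ∧
      ¬ ConcaveOn ℝ Set.univ
        (fun θ : EuclideanSpace ℝ (Fin d) =>
          Real.log (1 - ∏ u, (1 - sigmoid ⟪θ, x u⟫))) := by
  refine ⟨1, 2, ![(WithLp.toLp 2 (fun _ => 1) : EuclideanSpace ℝ (Fin 1)),
      (WithLp.toLp 2 (fun _ => -1) : EuclideanSpace ℝ (Fin 1))], le_refl 1, le_refl 2, ?_⟩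
  intro h
  set θ1 : EuclideanSpace ℝ (Fin 1) := WithLp.toLp 2 (fun _ => (1:ℝ)) with hθ1
  set θ2 : EuclideanSpace ℝ (Fin 1) := WithLp.toLp 2 (fun _ => (-1:ℝ)) with hθ2
  have key := h.2 (Set.mem_univ θ1) (Set.mem_univ θ2)
      (by norm_num : (0:ℝ) ≤ 1/2) (by norm_num : (0:ℝ) ≤ 1/2) (by norm_num)
  set E := Real.exp (-1) with hE
  have hE0 : 0 < E := Real.exp_pos _
  have hE1 : E < 1 := by
    rw [hE]
    calc Real.exp (-1) < Real.exp 0 := Real.exp_lt_exp.2 (by norm_num)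
    _ = 1 := Real.exp_zero
  have hEe : Real.exp 1 = 1 / E := by
    rw [hE, Real.exp_neg]
    field_simp
  -- inner products
  have inner_eval : ∀ (a b : ℝ),
      @inner ℝ (EuclideanSpace ℝ (Fin 1)) _ (WithLp.toLp 2 (fun _ => a)) (WithLp.toLp 2 (fun _ => b)) = a * b := by
    intro a b
    rw [PiLp.inner_apply]
    simp [Fin.sum_univ_one, mul_comm]
  have hmid : (1/2 : ℝ) • θ1 + (1/2 : ℝ) • θ2 = (WithLp.toLp 2 (fun _ => (0:ℝ)) : EuclideanSpace ℝ (Fin 1)) := by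
    ext i
    simp only [PiLp.add_apply, PiLp.smul_apply, hθ1, hθ2, smul_eq_mul, PiLp.toLp_apply]
    norm_num
  have hsig0 : sigmoid 0 = 1/2 := by
    simp [sigmoid, Real.exp_zero]
    norm_num
  have hsig1 : sigmoid 1 = 1 / (1 + E) := by
    show 1 / (1 + Real.exp (-1)) = 1 / (1 + E)
    rw [hE]
    all_goals ring
  have hsigm1 : sigmoid (-1) = E / (1 + E) := by
    show 1 / (1 + Real.exp (-(-1))) = E / (1 + E)
    rw [neg_neg, hEe]
    rw [div_eq_div_iff (by positivity) (by positivity)]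
    field_simp
    first | ring | tauto
  rw [hmid] at key
  simp only [Fin.prod_univ_two, Matrix.cons_val_zero, Matrix.cons_val_one, Matrix.head_cons] at key
  rw [inner_eval, inner_eval, inner_eval, inner_eval, inner_eval, inner_eval] at key
  norm_num [hsig0, hsig1, hsigm1] at key
  rw [mul_comm (1 - E / (1 + E))] at key
  have hlt : Real.log (3/4) < Real.log (1 - (1 - (1 + E)⁻¹) * (1 - E / (1 + E))) := by
    have hP : (1 - (1 + E)⁻¹) * (1 - E / (1 + E)) = E / (1 + E)^2 := by
      field_simp
      ring
    rw [hP]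
    apply Real.log_lt_log (by norm_num)
    have h4 : E / (1 + E)^2 < 1/4 := by
      rw [div_lt_iff₀ (by positivity)]
      nlinarith [sq_nonneg (1 - E)]
    linarith
  linarith [key, hlt]
end

section
/- If F is a family of functions from a sample set S (of size m) to ℝ whose evaluation vectors form a set F(S) ⊆ ℝ^m, every f ∈ F(S) has ‖f‖_∞ ≤ C, and N is the ℓ_∞ ε-covering number of F(S), then the empirical Rademacher complexity satisfies R(F(S)) ≤ C·√(2 log N / m) + ε. -/
open Finset Real

-- Jensen for exp over a finite uniform average
private lemma exp_avg_le (ι : Type*) [Fintype ι] [Nonempty ι] (x : ι → ℝ) :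
    Real.exp ((1 / (Fintype.card ι : ℝ)) * ∑ i, x i)
      ≤ (1 / (Fintype.card ι : ℝ)) * ∑ i, Real.exp (x i) := by
  have hc : (0:ℝ) < (Fintype.card ι : ℝ) := by
    exact_mod_cast Fintype.card_pos
  have h := convexOn_exp.map_sum_le (t := Finset.univ)
      (w := fun _ : ι => 1 / (Fintype.card ι : ℝ)) (p := x)
      (by intro i _; positivity)
      (by rw [Finset.sum_const, Finset.card_univ, nsmul_eq_mul, mul_one_div_cancel hc.ne'])
      (by intro i _; trivial)
  simpa [Finset.mul_sum, smul_eq_mul] using h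

private lemma stmt16_factorization (m : ℕ) (lam : ℝ) (z : Fin m → ℝ) :
    ∑ b : Fin m → Bool, Real.exp (lam * ∑ i, (if b i then (1:ℝ) else -1) * z i)
      = ∏ i, (Real.exp (lam * z i) + Real.exp (-(lam * z i))) := by
  have : ∀ b : Fin m → Bool,
      Real.exp (lam * ∑ i, (if b i then (1:ℝ) else -1) * z i)
        = ∏ i, Real.exp (lam * ((if b i then (1:ℝ) else -1) * z i)) := by
    intro b
    rw [← Real.exp_sum, Finset.mul_sum]
  rw [Finset.sum_congr rfl fun b _ => this b]
  rw [← Fintype.prod_sum (fun (i : Fin m) (y : Bool) =>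
        Real.exp (lam * ((if y then (1:ℝ) else -1) * z i)))]
  refine Finset.prod_congr rfl fun i _ => ?_
  rw [Fintype.sum_bool]
  norm_num

set_option maxHeartbeats 2000000 in
theorem stmt_16 (m : ℕ) (hm : 1 ≤ m) (C ε : ℝ) (hC : 0 ≤ C) (hε : 0 ≤ ε)
    (F : Finset (Fin m → ℝ)) (hF : F.Nonempty)
    (hbound : ∀ f ∈ F, ∀ i, |f i| ≤ C)
    (Z : Finset (Fin m → ℝ))
    (hcover : ∀ f ∈ F, ∃ z ∈ Z, ∀ i, |f i - z i| ≤ ε)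
    (N : ℕ) (hN : N = Z.card) :
    (1 / (m : ℝ)) * ((1 / 2 ^ m) *
        ∑ b : Fin m → Bool,
          F.sup' hF (fun f => ∑ i, (if b i then (1 : ℝ) else -1) * f i))
      ≤ C * Real.sqrt (2 * Real.log N / m) + ε := by
  classical
  have hm0 : (0:ℝ) < m := by exact_mod_cast hm
  -- clamp function
  set cl : ℝ → ℝ := fun x => max (-C) (min C x) with hcl
  have cl_lip : ∀ a b : ℝ, |cl a - cl b| ≤ |a - b| := by
    intro a b
    have h1 : |max (min C a) (-C) - max (min C b) (-C)| ≤ |min C a - min C b| :=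
      abs_max_sub_max_le_abs _ _ _
    have h2 : |min C a - min C b| ≤ max |C - C| |a - b| := abs_min_sub_min_le_max _ _ _ _
    simp only [hcl, max_comm (-C)]
    refine h1.trans (h2.trans ?_)
    simp [abs_nonneg]
  have cl_fix : ∀ x : ℝ, |x| ≤ C → cl x = x := by
    intro x hx
    rw [abs_le] at hx
    simp only [hcl]
    rw [min_eq_right hx.2, max_eq_right hx.1]
  have cl_bound : ∀ x : ℝ, |cl x| ≤ C := by
    intro x
    rw [abs_le]
    constructor
    · exact le_max_left _ _
    · simp only [hcl]
      exact max_le (neg_le_self hC) (min_le_left _ _)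
  -- clamped cover
  set K : Finset (Fin m → ℝ) := Z.image (fun z i => cl (z i)) with hK
  obtain ⟨f₀, hf₀⟩ := id hF
  obtain ⟨z₀, hz₀, _⟩ := hcover f₀ hf₀
  have hKne : K.Nonempty := ⟨_, Finset.mem_image_of_mem _ hz₀⟩
  have hKbound : ∀ z ∈ K, ∀ i, |z i| ≤ C := by
    intro z hz i
    obtain ⟨w, _, rfl⟩ := Finset.mem_image.1 hz
    exact cl_bound _
  have hKcover : ∀ f ∈ F, ∃ z ∈ K, ∀ i, |f i - z i| ≤ ε := by
    intro f hf
    obtain ⟨z, hz, hzc⟩ := hcover f hf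
    refine ⟨_, Finset.mem_image_of_mem _ hz, fun i => ?_⟩
    calc |f i - cl (z i)| = |cl (f i) - cl (z i)| := by rw [cl_fix _ (hbound f hf i)]
      _ ≤ |f i - z i| := cl_lip _ _
      _ ≤ ε := hzc i
  have hKcard : (K.card : ℝ) ≤ N := by
    rw [hN]; exact_mod_cast Finset.card_image_le
  have hN1 : 1 ≤ N := by
    rw [hN]; exact Finset.card_pos.2 ⟨z₀, hz₀⟩
  have hNpos : (0:ℝ) < N := by exact_mod_cast hN1
  have hL : 0 ≤ Real.log N := Real.log_nonneg (by exact_mod_cast hN1)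
  -- abbreviations
  set s : (Fin m → Bool) → Fin m → ℝ := fun b i => if b i then (1:ℝ) else -1 with hs
  set G : (Fin m → Bool) → ℝ := fun b => K.sup' hKne (fun z => ∑ i, s b i * z i) with hG
  set A : ℝ := (1 / 2 ^ m) * ∑ b : Fin m → Bool, G b with hA
  have h2m : (0:ℝ) < 2 ^ m := by positivity
  -- Step 1: reduce F to K paying mε
  have step1 : ∀ b : Fin m → Bool,
      F.sup' hF (fun f => ∑ i, s b i * f i) ≤ G b + m * ε := by
    intro b
    refine Finset.sup'_le _ _ fun f hf => ?_
    obtain ⟨z, hz, hzc⟩ := hKcover f hf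
    have h1 : ∑ i, s b i * f i - ∑ i, s b i * z i ≤ m * ε := by
      rw [← Finset.sum_sub_distrib]
      calc ∑ i, (s b i * f i - s b i * z i) ≤ ∑ i : Fin m, ε := by
            refine Finset.sum_le_sum fun i _ => ?_
            rw [← mul_sub]
            calc s b i * (f i - z i) ≤ |s b i * (f i - z i)| := le_abs_self _
              _ = |s b i| * |f i - z i| := abs_mul _ _
              _ ≤ 1 * ε := by
                  refine mul_le_mul ?_ (hzc i) (abs_nonneg _) zero_le_one
                  simp only [hs]; split <;> simp
              _ = ε := one_mul _
        _ = m * ε := by simp [mul_comm]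
    have h2 : ∑ i, s b i * z i ≤ G b := by
      exact Finset.le_sup' (fun z => ∑ i, s b i * z i) hz
    linarith
  -- Key exponential bound
  have key : ∀ lam : ℝ, 0 < lam → lam * A ≤ Real.log N + lam ^ 2 * C ^ 2 * m / 2 := by
    intro lam hlam
    have jensen : Real.exp (lam * A) ≤ (1 / 2 ^ m) * ∑ b : Fin m → Bool,
        Real.exp (lam * G b) := by
      have hcard : (Fintype.card (Fin m → Bool) : ℝ) = 2 ^ m := by
        simp [Fintype.card_fun]
      have := exp_avg_le (Fin m → Bool) (fun b => lam * G b)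
      rw [hcard] at this
      calc Real.exp (lam * A) = Real.exp ((1 / 2 ^ m) * ∑ b : Fin m → Bool, lam * G b) := by
            rw [hA, ← Finset.mul_sum]; ring_nf
        _ ≤ _ := this
    have expsum : ∀ b : Fin m → Bool,
        Real.exp (lam * G b) ≤ ∑ z ∈ K, Real.exp (lam * ∑ i, s b i * z i) := by
      intro b
      obtain ⟨z, hz, hzeq⟩ := Finset.exists_mem_eq_sup' hKne
        (fun w : Fin m → ℝ => ∑ i, s b i * w i)
      have h1 : G b = ∑ i, s b i * z i := hzeq
      rw [h1]
      refine Finset.single_le_sum (f := fun w : Fin m → ℝ => Real.exp (lam * ∑ i, s b i * w i))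
        (fun w _ => (Real.exp_pos _).le) hz
    have prodbound : ∀ z ∈ K,
        (1 / 2 ^ m) * ∑ b : Fin m → Bool, Real.exp (lam * ∑ i, s b i * z i)
          ≤ Real.exp (lam ^ 2 * C ^ 2 * m / 2) := by
      intro z hz
      rw [stmt16_factorization m lam z]
      have hcosh : ∀ i : Fin m, Real.exp (lam * z i) + Real.exp (-(lam * z i))
          = 2 * Real.cosh (lam * z i) := by
        intro i; rw [Real.cosh_eq]; ring
      rw [Finset.prod_congr rfl fun i _ => hcosh i, Finset.prod_mul_distrib,
        Finset.prod_const]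
      rw [Finset.card_univ, Fintype.card_fin]
      have heq : (1 / (2:ℝ) ^ m) * ((2:ℝ) ^ m * ∏ i : Fin m, Real.cosh (lam * z i))
          = ∏ i : Fin m, Real.cosh (lam * z i) := by
        field_simp
      rw [heq]
      calc ∏ i : Fin m, Real.cosh (lam * z i)
          ≤ ∏ i : Fin m, Real.exp ((lam * z i) ^ 2 / 2) := by
            refine Finset.prod_le_prod (fun i _ => (Real.cosh_pos _).le)
              (fun i _ => Real.cosh_le_exp_half_sq _)
        _ = Real.exp (∑ i : Fin m, (lam * z i) ^ 2 / 2) := by rw [Real.exp_sum]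
        _ ≤ Real.exp (lam ^ 2 * C ^ 2 * m / 2) := by
            refine Real.exp_le_exp.2 ?_
            calc ∑ i : Fin m, (lam * z i) ^ 2 / 2 ≤ ∑ i : Fin m, lam ^ 2 * C ^ 2 / 2 := by
                  refine Finset.sum_le_sum fun i _ => ?_
                  have := hKbound z hz i
                  have h1 : (z i) ^ 2 ≤ C ^ 2 := sq_le_sq' (neg_le_of_abs_le this) (le_of_abs_le this)
                  nlinarith [sq_nonneg lam]
              _ = lam ^ 2 * C ^ 2 * m / 2 := by
                  rw [Finset.sum_const, Finset.card_univ, Fintype.card_fin]; ring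
    have total : Real.exp (lam * A) ≤ N * Real.exp (lam ^ 2 * C ^ 2 * m / 2) := by
      calc Real.exp (lam * A) ≤ (1 / 2 ^ m) * ∑ b : Fin m → Bool, Real.exp (lam * G b) := jensen
        _ ≤ (1 / 2 ^ m) * ∑ b : Fin m → Bool, ∑ z ∈ K, Real.exp (lam * ∑ i, s b i * z i) := by
            refine mul_le_mul_of_nonneg_left (Finset.sum_le_sum fun b _ => expsum b) (by positivity)
        _ = ∑ z ∈ K, (1 / 2 ^ m) * ∑ b : Fin m → Bool, Real.exp (lam * ∑ i, s b i * z i) := by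
            rw [Finset.sum_comm, Finset.mul_sum]
        _ ≤ ∑ z ∈ K, Real.exp (lam ^ 2 * C ^ 2 * m / 2) :=
            Finset.sum_le_sum prodbound
        _ = K.card * Real.exp (lam ^ 2 * C ^ 2 * m / 2) := by
            rw [Finset.sum_const, nsmul_eq_mul]
        _ ≤ N * Real.exp (lam ^ 2 * C ^ 2 * m / 2) := by
            exact mul_le_mul_of_nonneg_right hKcard (Real.exp_pos _).le
    have := Real.log_le_log (Real.exp_pos _) total
    rwa [Real.log_exp, Real.log_mul (ne_of_gt hNpos) (Real.exp_pos _).ne',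
      Real.log_exp] at this
  -- Massart conclusion: A ≤ C * sqrt m * sqrt (2 log N)
  have massart : A ≤ C * Real.sqrt m * Real.sqrt (2 * Real.log N) := by
    rcases eq_or_lt_of_le hC with hC0 | hCpos
    · -- C = 0
      have hC0 : C = 0 := hC0.symm
      subst hC0
      have hA0 : A ≤ 0 := by
        by_contra h
        push_neg at h
        rcases eq_or_lt_of_le hL with hL0 | hLpos
        · have := key 1 one_pos
          simp at this
          nlinarith
        · have hlam : 0 < 2 * Real.log N / A := by positivity
          have := key _ hlam
          rw [div_mul_cancel₀ _ (ne_of_gt h)] at this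
          nlinarith
      calc A ≤ 0 := hA0
        _ ≤ _ := by positivity
    · rcases eq_or_lt_of_le hL with hL0 | hLpos
      · -- log N = 0
        have hA0 : A ≤ 0 := by
          by_contra h
          push_neg at h
          have hlam : 0 < A / (C ^ 2 * m) := by positivity
          have := key _ hlam
          rw [← hL0] at this
          have h2 : (A / (C ^ 2 * m)) ^ 2 * C ^ 2 * m / 2 = (A / (C ^ 2 * m)) * A / 2 := by
            field_simp
          rw [h2] at this
          nlinarith
        calc A ≤ 0 := hA0
          _ ≤ _ := by positivity
      · -- main case
        set r : ℝ := C * Real.sqrt m with hr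
        have hrpos : 0 < r := by
          refine mul_pos hCpos (Real.sqrt_pos.2 hm0)
        have hr2 : r ^ 2 = C ^ 2 * m := by
          rw [hr, mul_pow, Real.sq_sqrt hm0.le]
        have hsq : 0 < Real.sqrt (2 * Real.log N) := Real.sqrt_pos.2 (by linarith)
        set lam : ℝ := Real.sqrt (2 * Real.log N) / r with hlam
        have hlampos : 0 < lam := div_pos hsq hrpos
        have hC' : C ≠ 0 := ne_of_gt hCpos
        have hm' : (m:ℝ) ≠ 0 := ne_of_gt hm0
        have hlam2 : lam ^ 2 * C ^ 2 * m / 2 = Real.log N := by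
          rw [hlam, div_pow, Real.sq_sqrt (by linarith : (0:ℝ) ≤ 2 * Real.log N), hr2]
          field_simp
        have := key lam hlampos
        rw [hlam2] at this
        -- lam * A ≤ 2 log N, so A ≤ 2 log N / lam = r * sqrt (2 log N)
        have h2 : 2 * Real.log N = Real.sqrt (2 * Real.log N) * Real.sqrt (2 * Real.log N) :=
          (Real.mul_self_sqrt (by linarith)).symm
        have hfin : A ≤ 2 * Real.log N / lam := by
          rw [le_div_iff₀ hlampos]; linarith [this]
        calc A ≤ 2 * Real.log N / lam := hfin
          _ = r * Real.sqrt (2 * Real.log N) := by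
              rw [hlam, div_div_eq_mul_div, eq_comm, eq_div_iff (ne_of_gt hsq)]
              linear_combination (-r) * h2
  -- assemble
  have step1' : (1 / (m : ℝ)) * ((1 / 2 ^ m) *
        ∑ b : Fin m → Bool, F.sup' hF (fun f => ∑ i, s b i * f i))
      ≤ (1 / (m : ℝ)) * A + ε := by
    have hsum : ∑ b : Fin m → Bool, F.sup' hF (fun f => ∑ i, s b i * f i)
        ≤ ∑ b : Fin m → Bool, (G b + m * ε) := Finset.sum_le_sum fun b _ => step1 b
    have hcardb : (Fintype.card (Fin m → Bool) : ℝ) = 2 ^ m := by simp [Fintype.card_fun]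
    have : ∑ b : Fin m → Bool, (G b + m * ε) = (∑ b : Fin m → Bool, G b) + 2 ^ m * (m * ε) := by
      rw [Finset.sum_add_distrib, Finset.sum_const, Finset.card_univ, nsmul_eq_mul, hcardb]
    calc (1 / (m : ℝ)) * ((1 / 2 ^ m) *
          ∑ b : Fin m → Bool, F.sup' hF (fun f => ∑ i, s b i * f i))
        ≤ (1 / (m : ℝ)) * ((1 / 2 ^ m) * ((∑ b : Fin m → Bool, G b) + 2 ^ m * (m * ε))) := by
          refine mul_le_mul_of_nonneg_left (mul_le_mul_of_nonneg_left ?_ (by positivity))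
            (by positivity)
          rw [← this]; exact hsum
      _ = (1 / (m : ℝ)) * A + ε := by
          rw [hA]; field_simp
  refine step1'.trans ?_
  have : (1 / (m : ℝ)) * A ≤ C * Real.sqrt (2 * Real.log N / m) := by
    have h1 : (1 / (m : ℝ)) * A ≤ (1 / (m : ℝ)) * (C * Real.sqrt m * Real.sqrt (2 * Real.log N)) :=
      mul_le_mul_of_nonneg_left massart (by positivity)
    refine h1.trans (le_of_eq ?_)
    rw [Real.sqrt_div (by linarith : (0:ℝ) ≤ 2 * Real.log N)]
    have hmm : Real.sqrt m * Real.sqrt m = (m:ℝ) := Real.mul_self_sqrt hm0.le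
    have hsm : Real.sqrt (m:ℝ) ≠ 0 := by positivity
    have hm' : (m:ℝ) ≠ 0 := ne_of_gt hm0
    field_simp
    linear_combination (C * Real.sqrt (2 * Real.log N)) * hmm
  linarith
end

section
/- (Massart's lemma) Let A ⊆ ℝ^m be a finite set with max_{a∈A} ‖a‖₂ ≤ r. Then E_σ[max_{a∈A} ⟨σ, a⟩] ≤ r·√(2 log |A|), where σ is uniform on {±1}^m. -/
set_option maxHeartbeats 1000000

theorem stmt_17 (m : ℕ) (r : ℝ) (A : Finset (Fin m → ℝ)) (hA : A.Nonempty)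
    (hr : ∀ a ∈ A, Real.sqrt (∑ i, a i ^ 2) ≤ r) :
    (1 / 2 ^ m) *
        ∑ b : Fin m → Bool,
          A.sup' hA (fun a => ∑ i, (if b i then (1 : ℝ) else -1) * a i)
      ≤ r * Real.sqrt (2 * Real.log A.card) := by
  classical
  obtain ⟨a₀, ha₀⟩ := id hA
  have hr0 : 0 ≤ r := (Real.sqrt_nonneg _).trans (hr a₀ ha₀)
  have hsq : ∀ a ∈ A, ∑ i, a i ^ 2 ≤ r ^ 2 := by
    intro a ha
    have h1 : 0 ≤ ∑ i, a i ^ 2 := Finset.sum_nonneg fun i _ => sq_nonneg _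
    nlinarith [hr a ha, Real.sq_sqrt h1, Real.sqrt_nonneg (∑ i, a i ^ 2)]
  set M : (Fin m → Bool) → ℝ :=
    fun b => A.sup' hA (fun a => ∑ i, (if b i then (1 : ℝ) else -1) * a i) with hM
  set S : ℝ := (1 / 2 ^ m) * ∑ b : Fin m → Bool, M b with hS
  have hNpos : (0:ℝ) < 2 ^ m := by positivity
  have hcardA : 0 < A.card := Finset.card_pos.mpr hA
  have hcardA' : (1:ℝ) ≤ (A.card : ℝ) := by exact_mod_cast hcardA
  have hcard : (Finset.univ : Finset (Fin m → Bool)).card = 2 ^ m := by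
    simp [Finset.card_univ]
  -- Key Chernoff-type bound
  have key : ∀ t : ℝ, 0 < t → S ≤ Real.log A.card / t + t * r ^ 2 / 2 := by
    intro t ht
    -- Jensen
    have jensen : Real.exp (t * S) ≤
        (1 / 2 ^ m) * ∑ b : Fin m → Bool, Real.exp (t * M b) := by
      have h := convexOn_exp.map_sum_le (t := (Finset.univ : Finset (Fin m → Bool)))
        (w := fun _ => (1 / 2 ^ m : ℝ)) (p := fun b => t * M b)
        (fun _ _ => by positivity)
        (by
          rw [Finset.sum_const, hcard, nsmul_eq_mul]
          push_cast
          field_simp)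
        (fun _ _ => Set.mem_univ _)
      simp only [smul_eq_mul] at h
      calc Real.exp (t * S)
          = Real.exp (∑ b : Fin m → Bool, (1 / 2 ^ m) * (t * M b)) := by
            congr 1
            rw [hS, Finset.mul_sum, Finset.mul_sum]
            exact Finset.sum_congr rfl fun _ _ => by ring
        _ ≤ ∑ b : Fin m → Bool, (1 / 2 ^ m) * Real.exp (t * M b) := h
        _ = (1 / 2 ^ m) * ∑ b : Fin m → Bool, Real.exp (t * M b) := by
            rw [Finset.mul_sum]
    -- bound exp of sup' by the sum
    have step2 : ∀ b : Fin m → Bool, Real.exp (t * M b) ≤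
        ∑ a ∈ A, Real.exp (t * ∑ i, (if b i then (1:ℝ) else -1) * a i) := by
      intro b
      obtain ⟨a, haA, hae⟩ := A.exists_mem_eq_sup' hA
        (fun a => ∑ i, (if b i then (1:ℝ) else -1) * a i)
      have hMb : M b = ∑ i, (if b i then (1:ℝ) else -1) * a i := hae
      rw [hMb]
      have key' : ∀ g : (Fin m → ℝ) → ℝ, (∀ x ∈ A, 0 ≤ g x) → g a ≤ ∑ x ∈ A, g x :=
        fun g hg => Finset.single_le_sum hg haA
      exact key' (fun a => Real.exp (t * ∑ i, (if b i then (1:ℝ) else -1) * a i))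
        (fun x _ => (Real.exp_pos _).le)
    -- factorize the average over signs
    have step3 : ∀ a ∈ A, (1 / 2 ^ m : ℝ) *
        ∑ b : Fin m → Bool, Real.exp (t * ∑ i, (if b i then (1:ℝ) else -1) * a i)
        ≤ Real.exp (t ^ 2 * r ^ 2 / 2) := by
      intro a ha
      have h1 : ∀ b : Fin m → Bool,
          Real.exp (t * ∑ i, (if b i then (1:ℝ) else -1) * a i)
          = ∏ i, Real.exp (t * ((if b i then (1:ℝ) else -1) * a i)) := by
        intro b; rw [← Real.exp_sum, ← Finset.mul_sum]
      have h2 : ∑ b : Fin m → Bool, ∏ i, Real.exp (t * ((if b i then (1:ℝ) else -1) * a i))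
          = ∏ i, (Real.exp (t * a i) + Real.exp (-(t * a i))) := by
        have hp := Finset.prod_univ_sum (fun _ : Fin m => (Finset.univ : Finset Bool))
          (fun i j => Real.exp (t * ((if j then (1:ℝ) else -1) * a i)))
        rw [Fintype.piFinset_univ] at hp
        rw [← hp]
        refine Finset.prod_congr rfl fun i _ => ?_
        rw [Fintype.sum_bool]
        simp [mul_comm]
      have h3 : ∏ i, (Real.exp (t * a i) + Real.exp (-(t * a i)))
          ≤ (2:ℝ) ^ m * Real.exp (t ^ 2 * r ^ 2 / 2) := by
        have hstep : ∀ i : Fin m, Real.exp (t * a i) + Real.exp (-(t * a i))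
            ≤ 2 * Real.exp ((t * a i) ^ 2 / 2) := by
          intro i
          have hc := Real.cosh_le_exp_half_sq (t * a i)
          rw [Real.cosh_eq] at hc
          linarith
        calc ∏ i, (Real.exp (t * a i) + Real.exp (-(t * a i)))
            ≤ ∏ i : Fin m, 2 * Real.exp ((t * a i) ^ 2 / 2) := by
              refine Finset.prod_le_prod (fun i _ => by positivity) (fun i _ => hstep i)
          _ = (2:ℝ) ^ m * Real.exp (∑ i, (t * a i) ^ 2 / 2) := by
              rw [Finset.prod_mul_distrib, Finset.prod_const, Real.exp_sum]
              simp [Finset.card_univ]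
          _ ≤ (2:ℝ) ^ m * Real.exp (t ^ 2 * r ^ 2 / 2) := by
              have : ∑ i, (t * a i) ^ 2 / 2 ≤ t ^ 2 * r ^ 2 / 2 := by
                have := hsq a ha
                have heq : ∑ i, (t * a i) ^ 2 / 2 = t ^ 2 / 2 * ∑ i, a i ^ 2 := by
                  rw [Finset.mul_sum]; exact Finset.sum_congr rfl fun i _ => by ring
                rw [heq]
                nlinarith [sq_nonneg t]
              gcongr
      calc (1 / 2 ^ m : ℝ) *
            ∑ b : Fin m → Bool, Real.exp (t * ∑ i, (if b i then (1:ℝ) else -1) * a i)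
          = (1 / 2 ^ m : ℝ) *
            ∑ b : Fin m → Bool, ∏ i, Real.exp (t * ((if b i then (1:ℝ) else -1) * a i)) := by
            rw [Finset.sum_congr rfl fun b _ => h1 b]
        _ = (1 / 2 ^ m : ℝ) * ∏ i, (Real.exp (t * a i) + Real.exp (-(t * a i))) := by rw [h2]
        _ ≤ (1 / 2 ^ m : ℝ) * ((2:ℝ) ^ m * Real.exp (t ^ 2 * r ^ 2 / 2)) := by
            have h0 : (0:ℝ) ≤ 1 / 2 ^ m := by positivity
            exact mul_le_mul_of_nonneg_left h3 h0
        _ = Real.exp (t ^ 2 * r ^ 2 / 2) := by field_simp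
    -- combine
    have hfinal : Real.exp (t * S) ≤ (A.card : ℝ) * Real.exp (t ^ 2 * r ^ 2 / 2) := by
      calc Real.exp (t * S)
          ≤ (1 / 2 ^ m) * ∑ b : Fin m → Bool, Real.exp (t * M b) := jensen
        _ ≤ (1 / 2 ^ m) * ∑ b : Fin m → Bool,
              ∑ a ∈ A, Real.exp (t * ∑ i, (if b i then (1:ℝ) else -1) * a i) := by
            have h0 : (0:ℝ) ≤ 1 / 2 ^ m := by positivity
            exact mul_le_mul_of_nonneg_left
              (Finset.sum_le_sum fun b _ => step2 b) h0
        _ = ∑ a ∈ A, (1 / 2 ^ m : ℝ) *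
              ∑ b : Fin m → Bool, Real.exp (t * ∑ i, (if b i then (1:ℝ) else -1) * a i) := by
            rw [Finset.sum_comm, Finset.mul_sum]
        _ ≤ ∑ a ∈ A, Real.exp (t ^ 2 * r ^ 2 / 2) :=
            Finset.sum_le_sum step3
        _ = (A.card : ℝ) * Real.exp (t ^ 2 * r ^ 2 / 2) := by
            rw [Finset.sum_const, nsmul_eq_mul]
    have hlin : t * S ≤ Real.log A.card + t ^ 2 * r ^ 2 / 2 := by
      have h := hfinal
      rw [show (A.card : ℝ) * Real.exp (t ^ 2 * r ^ 2 / 2)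
          = Real.exp (Real.log A.card + t ^ 2 * r ^ 2 / 2) by
        rw [Real.exp_add, Real.exp_log (by positivity)]] at h
      exact Real.exp_le_exp.mp h
    have heq : Real.log A.card / t + t * r ^ 2 / 2
        = (Real.log A.card + t ^ 2 * r ^ 2 / 2) / t := by
      field_simp
    rw [heq, le_div_iff₀ ht]
    nlinarith [hlin]
  -- now handle cases
  rcases eq_or_lt_of_le hr0 with hr0' | hrpos
  · -- r = 0 : all elements of A are zero
    have hz : ∀ a ∈ A, ∀ i, a i = 0 := by
      intro a ha i
      have h1 := hsq a ha
      have h2 : a i ^ 2 ≤ ∑ j, a j ^ 2 :=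
        Finset.single_le_sum (fun j _ => sq_nonneg (a j)) (Finset.mem_univ i)
      nlinarith [sq_nonneg (a i)]
    have hM0 : ∀ b : Fin m → Bool, M b ≤ 0 := by
      intro b
      refine Finset.sup'_le _ _ fun a ha => le_of_eq ?_
      refine Finset.sum_eq_zero fun i _ => ?_
      rw [hz a ha i, mul_zero]
    have hS0 : S ≤ 0 := by
      rw [hS]
      have h1 : ∑ b : Fin m → Bool, M b ≤ 0 := Finset.sum_nonpos fun b _ => hM0 b
      have h2 : (0:ℝ) ≤ 1 / 2 ^ m := by positivity
      nlinarith [h1, h2]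
    calc S ≤ 0 := hS0
      _ ≤ r * Real.sqrt (2 * Real.log A.card) := by
          rw [← hr0']; simp
  · rcases eq_or_lt_of_le (Real.log_nonneg hcardA') with hL | hL
    · -- log card = 0
      have hS0 : S ≤ 0 := by
        by_contra hcon
        push_neg at hcon
        have ht : 0 < 2 * (S/2) / r ^ 2 := by positivity
        have h := key _ ht
        rw [← hL] at h
        have : S ≤ S / 2 := by
          calc S ≤ 0 / (2 * (S/2) / r ^ 2) + (2 * (S/2) / r ^ 2) * r ^ 2 / 2 := h
            _ = S / 2 := by field_simp; ring
        linarith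
      calc S ≤ 0 := hS0
        _ ≤ r * Real.sqrt (2 * Real.log A.card) := by positivity
    · -- main case
      set s := Real.sqrt (2 * Real.log A.card) with hs
      have hs2 : s ^ 2 = 2 * Real.log A.card := Real.sq_sqrt (by linarith)
      have hspos : 0 < s := Real.sqrt_pos.mpr (by linarith)
      have h := key (s / r) (by positivity)
      have hlog : Real.log A.card = s ^ 2 / 2 := by linarith
      have heq : Real.log A.card / (s / r) + (s / r) * r ^ 2 / 2 = r * s := by
        rw [hlog]; field_simp; ring
      linarith [heq ▸ h]
end
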